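/- Let (X, 𝓔) be a uniformly locally finite coarse space. Then 𝓔 equals the union over all operators a in the uniform Roe algebra C*_u(X,𝓔) and all ε > 0 of the sets {(x,y) ∈ X×X : ‖e_{yy} a e_{xx}‖ > ε}. -/

import Mathlib

open ContinuousLinearMap

/-- A coarse structure on `X`: a collection of subsets of `X × X` containing the diagonal
and closed under subsets, finite unions, inverses, and composition. -/
structure CoarseStructure (X : Type*) where
  sets : Set (Set (X × X))
  diagonal_mem : {p : X × X | p.1 = p.2} ∈ sets
  subset_mem : ∀ E ∈ sets, ∀ F ⊆ E, F ∈ sets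
  union_mem : ∀ E ∈ sets, ∀ F ∈ sets, E ∪ F ∈ sets
  inv_mem : ∀ E ∈ sets, {p : X × X | (p.2, p.1) ∈ E} ∈ sets
  comp_mem : ∀ E ∈ sets, ∀ F ∈ sets,
    {p : X × X | ∃ y, (p.1, y) ∈ E ∧ (y, p.2) ∈ F} ∈ sets

/-- A coarse structure is uniformly locally finite if each entourage has uniformly
finite sections. -/
def CoarseStructure.ULF {X : Type*} (𝓔 : CoarseStructure X) : Prop :=
  ∀ E ∈ 𝓔.sets, ∃ k : ℕ, ∀ x : X,
    Set.Finite {y | (x, y) ∈ E} ∧ Nat.card {y | (x, y) ∈ E} ≤ k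

noncomputable section

/-- The standard basis vector `δ_x` of `ℓ²(X)`. -/
def deltaVec (X : Type*) [DecidableEq X] (x : X) : lp (fun _ : X => ℂ) 2 :=
  lp.single 2 x 1

/-- The rank-one orthogonal projection `e_{xx}` onto `ℂ δ_x` in `ℓ²(X)`. -/
def ee (X : Type*) [DecidableEq X] (x : X) :
    lp (fun _ : X => ℂ) 2 →L[ℂ] lp (fun _ : X => ℂ) 2 :=
  (innerSL ℂ (deltaVec X x)).smulRight (deltaVec X x)

/-- The support of an operator `a` on `ℓ²(X)`:
`{(x, y) : ⟨a δ_x, δ_y⟩ ≠ 0}`. -/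
def opSupport {X : Type*} [DecidableEq X]
    (a : lp (fun _ : X => ℂ) 2 →L[ℂ] lp (fun _ : X => ℂ) 2) : Set (X × X) :=
  {p | inner (𝕜 := ℂ) (a (deltaVec X p.1)) (deltaVec X p.2) ≠ 0}

/-- The uniform Roe algebra of `(X, 𝓔)`: the operator-norm closure of the set of
operators with `𝓔`-bounded propagation. -/
def RoeAlgebra {X : Type*} [DecidableEq X] (𝓔 : CoarseStructure X) :
    Set (lp (fun _ : X => ℂ) 2 →L[ℂ] lp (fun _ : X => ℂ) 2) :=
  closure {a | opSupport a ∈ 𝓔.sets}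

end

open scoped ENNReal

section Auxiliary

variable {X : Type*} [DecidableEq X]

private lemma norm_deltaVec (x : X) : ‖deltaVec X x‖ = 1 := by
  have := lp.norm_single (E := fun _ : X => ℂ) (p := 2) (by norm_num) x (1 : ℂ)
  simpa [deltaVec] using this

private lemma norm_ee_comp (a : lp (fun _ : X => ℂ) 2 →L[ℂ] lp (fun _ : X => ℂ) 2) (x y : X) :
    ‖ee X y ∘L a ∘L ee X x‖ = ‖(inner (𝕜 := ℂ) (a (deltaVec X x)) (deltaVec X y) : ℂ)‖ := by
  have h : ee X y ∘L a ∘L ee X x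
      = (innerSL ℂ (deltaVec X x)).smulRight
          ((inner (𝕜 := ℂ) (deltaVec X y) (a (deltaVec X x)) : ℂ) • deltaVec X y) := by
    ext f
    simp [ee, inner_smul_right, smul_smul, mul_comm]
  rw [h, norm_smulRight_apply, innerSL_apply_norm, norm_smul, norm_deltaVec, norm_deltaVec,
    ← inner_conj_symm, RCLike.norm_conj]
  ring

private lemma exists_translation_op (E : Set (X × X)) (k k' : ℕ)
    (hk : ∀ x : X, Set.Finite {y | (x, y) ∈ E} ∧ Nat.card {y | (x, y) ∈ E} ≤ k)
    (hk' : ∀ y : X, Set.Finite {x | (x, y) ∈ E} ∧ Nat.card {x | (x, y) ∈ E} ≤ k') :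
    ∃ a : lp (fun _ : X => ℂ) 2 →L[ℂ] lp (fun _ : X => ℂ) 2,
      ∀ x y : X, ((x, y) ∈ E → inner (𝕜 := ℂ) (a (deltaVec X x)) (deltaVec X y) = 1)
        ∧ ((x, y) ∉ E → inner (𝕜 := ℂ) (a (deltaVec X x)) (deltaVec X y) = 0) := by
  classical
  set s : X → Finset X := fun y => (hk' y).1.toFinset with hs
  set t : X → Finset X := fun x => (hk x).1.toFinset with ht
  have hmem_s : ∀ x y : X, x ∈ s y ↔ (x, y) ∈ E := fun x y => (hk' y).1.mem_toFinset
  have hmem_t : ∀ x y : X, y ∈ t x ↔ (x, y) ∈ E := fun x y => (hk x).1.mem_toFinset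
  have hcard_s : ∀ y : X, (s y).card ≤ k' := by
    intro y
    have : (s y).card = Nat.card {x | (x, y) ∈ E} := by
      rw [Nat.card_coe_set_eq, Set.ncard_eq_toFinset_card _ ((hk' y).1)]
    rw [this]; exact (hk' y).2
  have hcard_t : ∀ x : X, (t x).card ≤ k := by
    intro x
    have : (t x).card = Nat.card {y | (x, y) ∈ E} := by
      rw [Nat.card_coe_set_eq, Set.ncard_eq_toFinset_card _ ((hk x).1)]
    rw [this]; exact (hk x).2
  set T0 : (X → ℂ) → (X → ℂ) := fun f y => ∑ x ∈ s y, f x with hT0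
  -- pointwise Cauchy-Schwarz
  have ptCS : ∀ (f : X → ℂ) (y : X),
      ‖T0 f y‖ ^ 2 ≤ (k' : ℝ) * ∑ x ∈ s y, ‖f x‖ ^ 2 := by
    intro f y
    calc ‖T0 f y‖ ^ 2 ≤ (∑ x ∈ s y, ‖f x‖) ^ 2 := by
          gcongr
          exact norm_sum_le _ _
      _ ≤ ((s y).card : ℝ) * ∑ x ∈ s y, ‖f x‖ ^ 2 := by
          exact_mod_cast sq_sum_le_card_mul_sum_sq (s := s y) (f := fun x => ‖f x‖)
      _ ≤ (k' : ℝ) * ∑ x ∈ s y, ‖f x‖ ^ 2 :=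
          mul_le_mul_of_nonneg_right (by exact_mod_cast hcard_s y)
            (Finset.sum_nonneg fun x _ => by positivity)
  -- swap lemma
  have swap : ∀ (g : X → ℝ), (∀ x, 0 ≤ g x) → ∀ F : Finset X,
      ∑ y ∈ F, ∑ x ∈ s y, g x ≤ (k : ℝ) * ∑ x ∈ F.biUnion s, g x := by
    intro g hg F
    have h1 : ∀ y ∈ F, ∑ x ∈ s y, g x
        = ∑ x ∈ F.biUnion s, if x ∈ s y then g x else 0 := by
      intro y hy
      rw [Finset.sum_ite_mem, Finset.inter_eq_right.mpr
        (fun x hx => Finset.mem_biUnion.mpr ⟨y, hy, hx⟩)]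
    calc ∑ y ∈ F, ∑ x ∈ s y, g x
        = ∑ y ∈ F, ∑ x ∈ F.biUnion s, if x ∈ s y then g x else 0 :=
          Finset.sum_congr rfl h1
      _ = ∑ x ∈ F.biUnion s, ∑ y ∈ F, if x ∈ s y then g x else 0 := Finset.sum_comm
      _ = ∑ x ∈ F.biUnion s, (((F.filter (fun y => x ∈ s y)).card : ℝ)) * g x := by
          refine Finset.sum_congr rfl fun x _ => ?_
          rw [← Finset.sum_filter, Finset.sum_const, nsmul_eq_mul]
      _ ≤ ∑ x ∈ F.biUnion s, (k : ℝ) * g x := by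
          refine Finset.sum_le_sum fun x _ => ?_
          have hsub : F.filter (fun y => x ∈ s y) ⊆ t x := fun y hy =>
            (hmem_t x y).mpr ((hmem_s x y).mp (Finset.mem_filter.mp hy).2)
          have : (F.filter fun y => x ∈ s y).card ≤ k :=
            le_trans (Finset.card_le_card hsub) (hcard_t x)
          exact mul_le_mul_of_nonneg_right (by exact_mod_cast this) (hg x)
      _ = (k : ℝ) * ∑ x ∈ F.biUnion s, g x := by rw [Finset.mul_sum]
  -- finset-sum estimate
  have main : ∀ (f : lp (fun _ : X => ℂ) 2) (F : Finset X),
      ∑ y ∈ F, ‖T0 f y‖ ^ 2 ≤ (k : ℝ) * (k' : ℝ) * ‖f‖ ^ 2 := by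
    intro f F
    have h2 : ∑ y ∈ F, ‖T0 f y‖ ^ 2 ≤ (k' : ℝ) * ∑ y ∈ F, ∑ x ∈ s y, ‖f x‖ ^ 2 := by
      rw [Finset.mul_sum]
      exact Finset.sum_le_sum fun y _ => ptCS f y
    have h3 := swap (fun x => ‖f x‖ ^ 2) (fun x => by positivity) F
    have h4 : ∑ x ∈ F.biUnion s, ‖f x‖ ^ 2 ≤ ‖f‖ ^ 2 := by
      have := lp.sum_rpow_le_norm_rpow (p := 2) (by norm_num) f (F.biUnion s)
      have e1 : ((2 : ℝ≥0∞).toReal) = ((2 : ℕ) : ℝ) := by norm_num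
      rw [e1] at this
      simpa [Real.rpow_natCast] using this
    calc ∑ y ∈ F, ‖T0 f y‖ ^ 2 ≤ (k' : ℝ) * ((k : ℝ) * ∑ x ∈ F.biUnion s, ‖f x‖ ^ 2) := by
          refine h2.trans (mul_le_mul_of_nonneg_left h3 (by positivity))
      _ ≤ (k' : ℝ) * ((k : ℝ) * ‖f‖ ^ 2) := by
          gcongr
      _ = (k : ℝ) * (k' : ℝ) * ‖f‖ ^ 2 := by ring
  -- membership in lp
  have hmem : ∀ f : lp (fun _ : X => ℂ) 2, Memℓp (T0 f) 2 := by
    intro f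
    refine memℓp_gen' (C := (k : ℝ) * (k' : ℝ) * ‖f‖ ^ 2) fun F => ?_
    have e1 : ∀ z : ℂ, ‖z‖ ^ ((2 : ℝ≥0∞).toReal) = ‖z‖ ^ 2 := by
      intro z
      rw [show ((2 : ℝ≥0∞).toReal) = ((2 : ℕ) : ℝ) by norm_num, Real.rpow_natCast]
    simpa [e1] using main f F
  -- linear map
  set Tlin : lp (fun _ : X => ℂ) 2 →ₗ[ℂ] lp (fun _ : X => ℂ) 2 :=
    { toFun := fun f => ⟨T0 f, hmem f⟩
      map_add' := by
        intro f g
        apply lp.ext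
        funext y
        show ∑ x ∈ s y, (f + g : lp _ 2) x = (∑ x ∈ s y, f x) + ∑ x ∈ s y, g x
        simp [lp.coeFn_add, Finset.sum_add_distrib]
        exact Finset.sum_add_distrib
      map_smul' := by
        intro c f
        apply lp.ext
        funext y
        show ∑ x ∈ s y, (c • f : lp _ 2) x = c • ∑ x ∈ s y, f x
        simp [lp.coeFn_smul, Finset.mul_sum] } with hTlin
  have hbound : ∀ f : lp (fun _ : X => ℂ) 2,
      ‖Tlin f‖ ≤ Real.sqrt ((k : ℝ) * (k' : ℝ)) * ‖f‖ := by
    intro f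
    refine lp.norm_le_of_forall_sum_le (by norm_num) (by positivity) fun F => ?_
    have e1 : ∀ z : ℂ, ‖z‖ ^ ((2 : ℝ≥0∞).toReal) = ‖z‖ ^ 2 := by
      intro z
      rw [show ((2 : ℝ≥0∞).toReal) = ((2 : ℕ) : ℝ) by norm_num, Real.rpow_natCast]
    have e2 : (Real.sqrt ((k : ℝ) * (k' : ℝ)) * ‖f‖) ^ ((2 : ℝ≥0∞).toReal)
        = (k : ℝ) * (k' : ℝ) * ‖f‖ ^ 2 := by
      rw [show ((2 : ℝ≥0∞).toReal) = ((2 : ℕ) : ℝ) by norm_num, Real.rpow_natCast,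
        mul_pow, Real.sq_sqrt (by positivity)]
    rw [e2]
    have : ∀ y, ‖(Tlin f : ∀ _ : X, ℂ) y‖ ^ ((2 : ℝ≥0∞).toReal) = ‖T0 f y‖ ^ 2 := by
      intro y; rw [e1]; rfl
    simp only [this]; exact main f F
  refine ⟨Tlin.mkContinuous _ hbound, fun x y => ?_⟩
  have happ : (Tlin.mkContinuous _ hbound) (deltaVec X x) = ⟨T0 (deltaVec X x), hmem _⟩ := rfl
  have hinner : inner (𝕜 := ℂ) ((Tlin.mkContinuous _ hbound) (deltaVec X x)) (deltaVec X y)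
      = inner (𝕜 := ℂ) (T0 (deltaVec X x) y) (1 : ℂ) := by
    rw [happ]
    simp only [deltaVec]
    rw [lp.inner_single_right]
  constructor
  · intro h
    have hx : x ∈ s y := (hmem_s x y).mpr h
    have hval : T0 (deltaVec X x) y = 1 := by
      rw [hT0]
      dsimp only
      rw [Finset.sum_eq_single_of_mem x hx]
      · exact lp.single_apply_self 2 x 1
      · intro b _ hb
        exact lp.single_apply_ne 2 x 1 hb
    rw [hinner, hval]
    simp [RCLike.inner_apply]
  · intro h
    have hval : T0 (deltaVec X x) y = 0 := by
      refine Finset.sum_eq_zero fun b hb => ?_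
      have hbx : b ≠ x := by
        rintro rfl
        exact h ((hmem_s b y).mp hb)
      exact lp.single_apply_ne 2 x 1 hbx
    rw [hinner, hval]
    simp [RCLike.inner_apply]

end Auxiliary

/-- For a u.l.f. coarse space `(X, 𝓔)`, an entourage is precisely a set on which some
operator of the uniform Roe algebra has all matrix coefficients of norm `> ε`:
`𝓔 = ⋃_{a ∈ C*_u(X,𝓔), ε > 0} {(x,y) : ‖e_yy a e_xx‖ > ε}` (as a collection of
entourages, `𝓔` consists exactly of the subsets of such sets). -/
theorem entourage_iff_roe_matrix_coefficients {X : Type*} [DecidableEq X]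
    (𝓔 : CoarseStructure X) (hulf : 𝓔.ULF) (E : Set (X × X)) :
    E ∈ 𝓔.sets ↔ ∃ a ∈ RoeAlgebra 𝓔, ∃ ε > (0 : ℝ),
      E ⊆ {p : X × X | ε < ‖ee X p.2 ∘L a ∘L ee X p.1‖} := by
  constructor
  · intro hE
    obtain ⟨k, hk⟩ := hulf E hE
    obtain ⟨k', hk'⟩ := hulf _ (𝓔.inv_mem E hE)
    have hk'' : ∀ y : X, Set.Finite {x | (x, y) ∈ E} ∧ Nat.card {x | (x, y) ∈ E} ≤ k' :=
      fun y => hk' y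
    obtain ⟨a, ha⟩ := exists_translation_op E k k' hk hk''
    have hsupp : opSupport a ∈ 𝓔.sets := by
      refine 𝓔.subset_mem E hE _ ?_
      intro p hp
      by_contra hpE
      exact hp ((ha p.1 p.2).2 hpE)
    refine ⟨a, subset_closure hsupp, 1 / 2, by norm_num, ?_⟩
    rintro ⟨x, y⟩ hp
    show (1 : ℝ) / 2 < ‖ee X y ∘L a ∘L ee X x‖
    rw [norm_ee_comp, (ha x y).1 hp]
    norm_num
  · rintro ⟨a, ha, ε, hε, hsub⟩
    rw [RoeAlgebra, Metric.mem_closure_iff] at ha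
    obtain ⟨b, hb, hab⟩ := ha ε hε
    refine 𝓔.subset_mem _ hb E ?_
    rintro ⟨x, y⟩ hp
    have h1 : ε < ‖(inner (𝕜 := ℂ) (a (deltaVec X x)) (deltaVec X y) : ℂ)‖ := by
      have := hsub hp
      rwa [Set.mem_setOf_eq, norm_ee_comp] at this
    show inner (𝕜 := ℂ) (b (deltaVec X x)) (deltaVec X y) ≠ 0
    intro h0
    have h2 : ‖(inner (𝕜 := ℂ) ((a - b) (deltaVec X x)) (deltaVec X y) : ℂ)‖ ≤ ‖a - b‖ := by
      calc ‖(inner (𝕜 := ℂ) ((a - b) (deltaVec X x)) (deltaVec X y) : ℂ)‖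
          ≤ ‖(a - b) (deltaVec X x)‖ * ‖deltaVec X y‖ := norm_inner_le_norm _ _
        _ ≤ ‖a - b‖ * ‖deltaVec X x‖ * ‖deltaVec X y‖ := by
            gcongr
            exact ContinuousLinearMap.le_opNorm _ _
        _ = ‖a - b‖ := by rw [norm_deltaVec, norm_deltaVec]; ring
    have h3 : (inner (𝕜 := ℂ) ((a - b) (deltaVec X x)) (deltaVec X y) : ℂ)
        = inner (𝕜 := ℂ) (a (deltaVec X x)) (deltaVec X y) := by
      rw [ContinuousLinearMap.sub_apply, inner_sub_left, h0, sub_zero]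
    rw [h3] at h2
    have h4 : ‖a - b‖ < ε := by rwa [← dist_eq_norm]
    linarith
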